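/- arXiv:1502.06173 — 6 statements merged into one kernel-verified Lean document; each statement's English description precedes it below -/
import Mathlib

section
/- Let N ≥ 2 and let L and M be N×N real symmetric matrices. Then L̂ = M̂ (i.e., L̂_{ij} = M̂_{ij} for all i ≠ j) if and only if there exists a strictly increasing function f : ℝ → ℝ such that L_{ij} = f(M_{ij}) for all i ≠ j. -/
/-- The matrix ordering `M̂`: for off-diagonal indices `i ≠ j`, `matOrd M i j` is the
number of upper-triangular entries `M k ℓ` (with `k < ℓ`) that are strictly smaller
than `M i j`. -/
noncomputable def matOrd {N : ℕ} (M : Matrix (Fin N) (Fin N) ℝ) (i j : Fin N) : ℕ :=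
  (Finset.univ.filter (fun q : Fin N × Fin N => q.1 < q.2 ∧ M q.1 q.2 < M i j)).card

lemma matOrd_lt_matOrd {N : ℕ} {M : Matrix (Fin N) (Fin N) ℝ} (hM : M.IsSymm)
    {i j k l : Fin N} (hij : i ≠ j) (h : M i j < M k l) :
    matOrd M i j < matOrd M k l := by
  classical
  apply Finset.card_lt_card
  rw [Finset.ssubset_iff_of_subset]
  · rcases hij.lt_or_gt with hlt | hlt
    · refine ⟨(i, j), ?_, ?_⟩
      · simp only [Finset.mem_filter, Finset.mem_univ, true_and]
        exact ⟨hlt, h⟩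
      · simp only [Finset.mem_filter, Finset.mem_univ, true_and]
        rintro ⟨-, h2⟩; exact lt_irrefl _ h2
    · refine ⟨(j, i), ?_, ?_⟩
      · simp only [Finset.mem_filter, Finset.mem_univ, true_and]
        exact ⟨hlt, by rw [hM.apply]; exact h⟩
      · simp only [Finset.mem_filter, Finset.mem_univ, true_and]
        rintro ⟨-, h2⟩
        rw [hM.apply] at h2
        exact lt_irrefl _ h2
  · intro q hq
    simp only [Finset.mem_filter, Finset.mem_univ, true_and] at hq ⊢
    exact ⟨hq.1, hq.2.trans h⟩

lemma matOrd_lt_iff {N : ℕ} {M : Matrix (Fin N) (Fin N) ℝ} (hM : M.IsSymm)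
    {i j k l : Fin N} (hij : i ≠ j) (hkl : k ≠ l) :
    matOrd M i j < matOrd M k l ↔ M i j < M k l := by
  constructor
  · intro h
    by_contra hc
    push_neg at hc
    rcases eq_or_lt_of_le hc with heq | hlt
    · have : matOrd M k l = matOrd M i j := by
        unfold matOrd
        congr 1
        apply Finset.filter_congr
        intro q _
        rw [heq]
      omega
    · exact absurd (matOrd_lt_matOrd hM hkl hlt) (by omega)
  · exact matOrd_lt_matOrd hM hij

/-- Two symmetric matrices have the same matrix ordering, `L̂ = M̂`, if and only if
`L` is obtained from `M` by applying a strictly increasing function to each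
off-diagonal entry. -/
theorem matOrd_eq_iff_exists_strictMono {N : ℕ} (hN : 2 ≤ N)
    (L M : Matrix (Fin N) (Fin N) ℝ) (hL : L.IsSymm) (hM : M.IsSymm) :
    (∀ i j : Fin N, i ≠ j → matOrd L i j = matOrd M i j) ↔
      ∃ f : ℝ → ℝ, StrictMono f ∧ ∀ i j : Fin N, i ≠ j → L i j = f (M i j) := by
  classical
  constructor
  · intro h
    -- Key comparison facts
    have hlt : ∀ i j k l : Fin N, i ≠ j → k ≠ l → (M i j < M k l ↔ L i j < L k l) := by
      intro i j k l hij hkl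
      rw [← matOrd_lt_iff hM hij hkl, ← h i j hij, ← h k l hkl, matOrd_lt_iff hL hij hkl]
    have heq : ∀ i j k l : Fin N, i ≠ j → k ≠ l → M i j = M k l → L i j = L k l := by
      intro i j k l hij hkl hMe
      have h1 : ¬ M i j < M k l := by rw [hMe]; exact lt_irrefl _
      have h2 : ¬ M k l < M i j := by rw [hMe]; exact lt_irrefl _
      rw [hlt i j k l hij hkl] at h1
      rw [hlt k l i j hkl hij] at h2
      exact le_antisymm (not_lt.1 h2) (not_lt.1 h1)
    -- choice of the slope δ
    set T : Finset ((Fin N × Fin N) × (Fin N × Fin N)) :=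
      Finset.univ.filter (fun q => q.1.1 ≠ q.1.2 ∧ q.2.1 ≠ q.2.2 ∧
        M q.1.1 q.1.2 < M q.2.1 q.2.2) with hT
    set δ : ℝ := if hne : T.Nonempty then
        T.inf' hne (fun q => (L q.2.1 q.2.2 - L q.1.1 q.1.2) / (M q.2.1 q.2.2 - M q.1.1 q.1.2))
      else 1 with hδ
    have hδpos : 0 < δ := by
      rw [hδ]
      split_ifs with hne
      · rw [Finset.lt_inf'_iff]
        intro q hq
        simp only [hT, Finset.mem_filter, Finset.mem_univ, true_and] at hq
        obtain ⟨h1, h2, h3⟩ := hq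
        have hL3 : L q.1.1 q.1.2 < L q.2.1 q.2.2 := (hlt _ _ _ _ h1 h2).1 h3
        exact div_pos (by linarith) (by linarith)
      · norm_num
    have hδle : ∀ i j k l : Fin N, i ≠ j → k ≠ l → M i j < M k l →
        δ * (M k l - M i j) ≤ L k l - L i j := by
      intro i j k l hij hkl hm
      have hmem : ((i, j), (k, l)) ∈ T := by
        simp only [hT, Finset.mem_filter, Finset.mem_univ, true_and]
        exact ⟨hij, hkl, hm⟩
      have hne : T.Nonempty := ⟨_, hmem⟩
      have : δ ≤ (L k l - L i j) / (M k l - M i j) := by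
        rw [hδ, dif_pos hne]
        exact Finset.inf'_le _ hmem
      rw [le_div_iff₀ (by linarith)] at this
      linarith
    -- the partial function on the set of off-diagonal values of M
    set S : Set ℝ := {x | ∃ p : Fin N × Fin N, p.1 ≠ p.2 ∧ M p.1 p.2 = x} with hS
    set g : ℝ → ℝ := fun x =>
      if hx : ∃ p : Fin N × Fin N, p.1 ≠ p.2 ∧ M p.1 p.2 = x then
        L hx.choose.1 hx.choose.2 - δ * x
      else x with hg
    have hgval : ∀ i j : Fin N, i ≠ j → g (M i j) = L i j - δ * M i j := by
      intro i j hij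
      have hx : ∃ p : Fin N × Fin N, p.1 ≠ p.2 ∧ M p.1 p.2 = M i j := ⟨(i, j), hij, rfl⟩
      rw [hg]
      simp only [dif_pos hx]
      have hc := hx.choose_spec
      rw [heq _ _ i j hc.1 hij hc.2]
    have hSfin : S.Finite := by
      apply Set.Finite.subset (Set.finite_range (fun p : Fin N × Fin N => M p.1 p.2))
      rintro x ⟨p, -, hp⟩
      exact ⟨p, hp⟩
    have hmono : MonotoneOn g S := by
      rintro x ⟨p, hp, hpx⟩ y ⟨q, hq, hqy⟩ hxy
      rcases eq_or_lt_of_le hxy with rfl | hlt'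
      · exact le_rfl
      · subst hpx; subst hqy
        rw [hgval _ _ hp, hgval _ _ hq]
        have := hδle _ _ _ _ hp hq hlt'
        linarith
    obtain ⟨G, hGmono, hGeq⟩ := hmono.exists_monotone_extension
      (hSfin.image g).bddBelow (hSfin.image g).bddAbove
    refine ⟨fun x => G x + δ * x, ?_, ?_⟩
    · intro x y hxy
      have := hGmono hxy.le
      have := mul_lt_mul_of_pos_left hxy hδpos
      dsimp only
      linarith
    · intro i j hij
      have hmem : M i j ∈ S := ⟨(i, j), hij, rfl⟩
      dsimp only
      rw [← hGeq hmem, hgval _ _ hij]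
      ring
  · rintro ⟨f, hf, hfval⟩ i j hij
    unfold matOrd
    congr 1
    apply Finset.filter_congr
    intro q _
    by_cases hq : q.1 < q.2
    · simp only [hq, true_and]
      rw [hfval _ _ hq.ne, hfval _ _ hij, hf.lt_iff_lt]
    · simp [hq]
end

section
/- Let M be an N×N real symmetric matrix with zero diagonal, let ε ∈ ℝ, and define points p_1,…,p_N ∈ ℝ^N by p_i = (1/√2)(e_i − (ε/2) Σ_{j=1}^N M_{ij} e_j), where e_1,…,e_N is the standard orthonormal basis of ℝ^N. Then for every pair i ≠ j, the squared Euclidean distance satisfies ‖p_i − p_j‖² = 1 + ε M_{ij} + (ε²/8) Σ_{k=1}^N (M_{ik} − M_{jk})². -/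
/-- Exact computation of the squared distances between the points
`pᵢ = (1/√2)(eᵢ − (ε/2) ∑ⱼ Mᵢⱼ eⱼ)` built from a symmetric matrix `M` with zero
diagonal: for `i ≠ j`,
`‖pᵢ − pⱼ‖² = 1 + ε Mᵢⱼ + (ε²/8) ∑ₖ (Mᵢₖ − Mⱼₖ)²`. -/
theorem dist_sq_of_perturbed_basis {N : ℕ} (M : Matrix (Fin N) (Fin N) ℝ)
    (hsym : M.IsSymm) (hdiag : ∀ i, M i i = 0) (ε : ℝ)
    (p : Fin N → EuclideanSpace ℝ (Fin N))
    (hp : ∀ i, p i = (Real.sqrt 2)⁻¹ •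
      (EuclideanSpace.single i (1 : ℝ) -
        (ε / 2) • ∑ j : Fin N, M i j • EuclideanSpace.single j (1 : ℝ))) :
    ∀ i j : Fin N, i ≠ j →
      ‖p i - p j‖ ^ 2 = 1 + ε * M i j + ε ^ 2 / 8 * ∑ k : Fin N, (M i k - M j k) ^ 2 := by
  intro i j hij
  have hs : ∀ (a : Fin N) (k : Fin N),
      (∑ x, M a x • EuclideanSpace.single x (1:ℝ)) k = M a k := by
    intro a k
    have h1 : (∑ x, M a x • EuclideanSpace.single x (1:ℝ)) k
        = ∑ x, (M a x • EuclideanSpace.single x (1:ℝ)) k :=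
      by rw [WithLp.ofLp_sum]; exact Finset.sum_apply k Finset.univ _
    rw [h1]
    simp [EuclideanSpace.single_apply]
  have hcoord : ∀ k, (p i - p j) k = (Real.sqrt 2)⁻¹ *
      (((if i = k then (1:ℝ) else 0) - (if j = k then (1:ℝ) else 0))
        - ε / 2 * (M i k - M j k)) := by
    intro k
    simp only [hp, PiLp.sub_apply, PiLp.smul_apply, smul_eq_mul, hs,
      EuclideanSpace.single_apply]
    by_cases h1 : i = k <;> by_cases h2 : j = k <;>
      simp [h1, h2, eq_comm] <;> ring
  have hnorm : ‖p i - p j‖ ^ 2 = ∑ k, ((p i - p j) k) ^ 2 := by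
    rw [EuclideanSpace.norm_eq, Real.sq_sqrt (by positivity)]
    simp [Real.norm_eq_abs, sq_abs]
  rw [hnorm]
  have h2 : ((Real.sqrt 2)⁻¹) ^ 2 = 1/2 := by
    rw [inv_pow, Real.sq_sqrt (by norm_num)]; norm_num
  calc ∑ k, ((p i - p j) k) ^ 2
      = ∑ k, (1/2) * ((((if i = k then (1:ℝ) else 0) - (if j = k then (1:ℝ) else 0))
        - ε / 2 * (M i k - M j k)) ^ 2) := by
        refine Finset.sum_congr rfl fun k _ => ?_
        rw [hcoord k, mul_pow, h2]
    _ = ∑ k, ((1/2) * ((if i = k then (1:ℝ) else 0) - (if j = k then (1:ℝ) else 0))^2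
          - (1/2) * ε * ((if i = k then (1:ℝ) else 0) - (if j = k then (1:ℝ) else 0)) * (M i k - M j k)
          + ε^2/8 * (M i k - M j k)^2) := by
        refine Finset.sum_congr rfl fun k _ => ?_; ring
    _ = 1 + ε * M i j + ε ^ 2 / 8 * ∑ k : Fin N, (M i k - M j k) ^ 2 := by
        rw [Finset.sum_add_distrib, Finset.sum_sub_distrib, ← Finset.mul_sum]
        have e1 : ∑ k, ((1:ℝ)/2) * ((if i = k then (1:ℝ) else 0) - (if j = k then (1:ℝ) else 0))^2 = 1 := by
          have : ∀ k, ((1:ℝ)/2) * ((if i = k then (1:ℝ) else 0) - (if j = k then (1:ℝ) else 0))^2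
              = (1/2) * ((if i = k then (1:ℝ) else 0) + (if j = k then (1:ℝ) else 0)
                - 2 * (if i = k then (1:ℝ) else 0) * (if j = k then (1:ℝ) else 0)) := by
            intro k; by_cases hi : i = k <;> by_cases hj : j = k <;> simp [hi, hj] <;> ring
          simp only [this]
          rw [← Finset.mul_sum, Finset.sum_sub_distrib, Finset.sum_add_distrib]
          have hij2 : ∀ k, (if i = k then (1:ℝ) else 0) * (if j = k then (1:ℝ) else 0) = 0 := by
            intro k; by_cases hi : i = k <;> by_cases hj : j = k <;> simp_all
          simp [hij2, hij]; norm_num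
        have e2 : ∑ k, ((1:ℝ)/2) * ε * ((if i = k then (1:ℝ) else 0) - (if j = k then (1:ℝ) else 0)) * (M i k - M j k)
            = - (ε * M i j) := by
          have : ∀ k, ((1:ℝ)/2) * ε * ((if i = k then (1:ℝ) else 0) - (if j = k then (1:ℝ) else 0)) * (M i k - M j k)
              = (if i = k then (1/2) * ε * (M i k - M j k) else 0)
                - (if j = k then (1/2) * ε * (M i k - M j k) else 0) := by
            intro k; by_cases hi : i = k <;> by_cases hj : j = k <;> simp [hi, hj] <;> ring
          simp only [this]
          rw [Finset.sum_sub_distrib, Finset.sum_ite_eq, Finset.sum_ite_eq]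
          have hji : M j i = M i j := by
            have := congrFun (congrFun hsym i) j
            simpa [Matrix.transpose_apply] using this
          simp [hdiag, hji]
          ring
        rw [e2, Finset.mul_sum, e1, ← Finset.mul_sum]; ring
end

section
/- Let M be an N×N real symmetric matrix with zero diagonal whose upper-triangular entries {M_{ij}}_{i<j} are pairwise distinct. For ε > 0 define points p_1,…,p_N ∈ ℝ^N by p_i = (1/√2)(e_i − (ε/2) Σ_{j=1}^N M_{ij} e_j), where e_1,…,e_N is the standard orthonormal basis. Then there exists ε_0 > 0 such that for all ε with 0 < ε < ε_0 and all index pairs i < j and k < ℓ with (i,j) ≠ (k,ℓ), one has ‖p_i − p_j‖ < ‖p_k − p_ℓ‖ if and only if M_{ij} < M_{kℓ}. In particular, the Euclidean distance matrix D_{ij} = ‖p_i − p_j‖ satisfies D̂ = M̂, so every matrix ordering with distinct off-diagonal entries possesses a geometric realization by N points in (N−1)-dimensional Euclidean space. -/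
noncomputable def Cc {N : ℕ} (M : Matrix (Fin N) (Fin N) ℝ) (i j : Fin N) : ℝ :=
  (1/8) * ∑ k : Fin N, (M i k - M j k)^2

lemma Cc_nonneg {N : ℕ} (M : Matrix (Fin N) (Fin N) ℝ) (i j : Fin N) : 0 ≤ Cc M i j := by
  unfold Cc; positivity

lemma sign_lemma (ε B c d : ℝ) (hε : 0 < ε) (hB : 0 ≤ B) (hc1 : -B ≤ c) (hc2 : c ≤ B)
    (hd : ε * (2*B+1) < |d|) : (ε*d + ε^2*c < 0 ↔ d < 0) := by
  rcases abs_cases d with ⟨h1, h2⟩ | ⟨h1, h2⟩ <;> rw [h1] at hd <;> constructor <;> intro h <;>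
    nlinarith [mul_lt_mul_of_pos_left hd hε, mul_pos hε hε, sq_nonneg ε]

lemma distSq {N : ℕ} (M : Matrix (Fin N) (Fin N) ℝ)
    (hsym : M.IsSymm) (hdiag : ∀ i, M i i = 0)
    (p : ℝ → Fin N → EuclideanSpace ℝ (Fin N))
    (hp : ∀ ε i, p ε i = (Real.sqrt 2)⁻¹ •
      (EuclideanSpace.single i (1 : ℝ) -
        (ε / 2) • ∑ j : Fin N, M i j • EuclideanSpace.single j (1 : ℝ)))
    (ε : ℝ) (i j : Fin N) (hij : i ≠ j) :
    dist (p ε i) (p ε j) ^ 2 = 1 + ε * M i j + ε^2 * Cc M i j := by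
  have hM : ∀ a b : Fin N, M b a = M a b := fun a b => hsym.apply a b
  have hcoord : ∀ (l k : Fin N), (p ε l) k
      = (Real.sqrt 2)⁻¹ * ((if k = l then 1 else 0) - ε / 2 * M l k) := by
    intro l k
    rw [hp]
    have hs : (∑ x : Fin N, M l x • EuclideanSpace.single x (1:ℝ)) k = M l k := by
      rw [WithLp.ofLp_sum, Finset.sum_apply]; simp [EuclideanSpace.single_apply]
    simp [EuclideanSpace.single_apply, hs, mul_comm]
  have hdist : dist (p ε i) (p ε j) ^ 2 = ∑ k : Fin N, (p ε i k - p ε j k)^2 := by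
    rw [EuclideanSpace.dist_eq, Real.sq_sqrt (by positivity)]
    refine Finset.sum_congr rfl fun k _ => by rw [Real.dist_eq, sq_abs]
  have h2 : (Real.sqrt 2)⁻¹ ^ 2 = 1/2 := by
    rw [inv_pow, Real.sq_sqrt (by norm_num : (0:ℝ) ≤ 2)]; norm_num
  have e1 : ∀ k : Fin N, (p ε i k - p ε j k)^2 =
      (1/2) * ((if k = i then (1:ℝ) else 0) * (if k = i then 1 else 0))
      + (1/2) * ((if k = j then (1:ℝ) else 0) * (if k = j then 1 else 0))
      + (ε^2/8) * (M i k - M j k)^2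
      - ((if k = i then (1:ℝ) else 0) * (if k = j then 1 else 0))
      - (ε/2) * ((if k = i then (1:ℝ) else 0) * (M i k - M j k))
      + (ε/2) * ((if k = j then (1:ℝ) else 0) * (M i k - M j k)) := by
    intro k
    rw [hcoord, hcoord]
    have expand : ((Real.sqrt 2)⁻¹ * ((if k = i then (1:ℝ) else 0) - ε / 2 * M i k)
        - (Real.sqrt 2)⁻¹ * ((if k = j then (1:ℝ) else 0) - ε / 2 * M j k))^2
        = (Real.sqrt 2)⁻¹ ^ 2 * (((if k = i then (1:ℝ) else 0)) - ((if k = j then (1:ℝ) else 0))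
            - ε/2 * (M i k - M j k))^2 := by ring
    rw [expand, h2]; ring
  rw [hdist, Finset.sum_congr rfl fun k _ => e1 k]
  have hA : ∑ k : Fin N, (1/2) * ((if k = i then (1:ℝ) else 0) * (if k = i then 1 else 0)) = 1/2 := by
    simp
  have hB : ∑ k : Fin N, (1/2) * ((if k = j then (1:ℝ) else 0) * (if k = j then 1 else 0)) = 1/2 := by
    simp
  have hCs : ∑ k : Fin N, ((if k = i then (1:ℝ) else 0) * (if k = j then 1 else 0)) = 0 := by
    simp [Finset.sum_ite_eq, hij.symm]
  have hD : ∑ k : Fin N, (ε/2) * ((if k = i then (1:ℝ) else 0) * (M i k - M j k))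
      = (ε/2) * (- M i j) := by
    rw [← Finset.mul_sum]
    congr 1
    simp [hdiag, hM i j]
  have hE : ∑ k : Fin N, (ε/2) * ((if k = j then (1:ℝ) else 0) * (M i k - M j k))
      = (ε/2) * (M i j) := by
    rw [← Finset.mul_sum]
    congr 1
    simp [hdiag]
  have hF : ∑ k : Fin N, (ε^2/8) * (M i k - M j k)^2 = ε^2 * Cc M i j := by
    rw [← Finset.mul_sum]; unfold Cc; ring
  simp only [Finset.sum_add_distrib, Finset.sum_sub_distrib]
  rw [hA, hB, hCs, hD, hE, hF]
  ring



/-- Geometric realization of an arbitrary matrix ordering: for a symmetric matrix `M`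
with zero diagonal and pairwise distinct upper-triangular entries, the points
`pᵢ(ε) = (1/√2)(eᵢ − (ε/2) ∑ⱼ Mᵢⱼ eⱼ)` in `ℝᴺ` satisfy, for all small enough `ε > 0`,
`‖pᵢ − pⱼ‖ < ‖pₖ − pₗ‖ ↔ Mᵢⱼ < Mₖₗ`; in particular the Euclidean distance matrix
`Dᵢⱼ = ‖pᵢ − pⱼ‖` satisfies `D̂ = M̂`, i.e. the points are a geometric realization
of the matrix ordering `M̂`. -/
theorem exists_geometric_realization {N : ℕ} (M : Matrix (Fin N) (Fin N) ℝ)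
    (hsym : M.IsSymm) (hdiag : ∀ i, M i i = 0)
    (hdist : ∀ i j k l : Fin N, i < j → k < l → (i, j) ≠ (k, l) → M i j ≠ M k l)
    (p : ℝ → Fin N → EuclideanSpace ℝ (Fin N))
    (hp : ∀ ε i, p ε i = (Real.sqrt 2)⁻¹ •
      (EuclideanSpace.single i (1 : ℝ) -
        (ε / 2) • ∑ j : Fin N, M i j • EuclideanSpace.single j (1 : ℝ))) :
    ∃ ε₀ > (0 : ℝ), ∀ ε : ℝ, 0 < ε → ε < ε₀ →
      (∀ i j k l : Fin N, i < j → k < l → (i, j) ≠ (k, l) →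
        (dist (p ε i) (p ε j) < dist (p ε k) (p ε l) ↔ M i j < M k l)) ∧
      (∀ i j : Fin N, i ≠ j →
        matOrd (Matrix.of fun a b : Fin N => dist (p ε a) (p ε b)) i j = matOrd M i j) := by
  classical
  have hM : ∀ a b : Fin N, M b a = M a b := fun a b => hsym.apply a b
  set B : ℝ := ∑ q : Fin N × Fin N, Cc M q.1 q.2 with hBdef
  have hBnn : 0 ≤ B := Finset.sum_nonneg fun q _ => Cc_nonneg M q.1 q.2
  have hCb : ∀ i j : Fin N, Cc M i j ≤ B := fun i j =>
    Finset.single_le_sum (f := fun q : Fin N × Fin N => Cc M q.1 q.2)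
      (fun q _ => Cc_nonneg M q.1 q.2) (Finset.mem_univ (i, j))
  set g : (Fin N × Fin N) × (Fin N × Fin N) → ℝ := fun q =>
    if q.1.1 < q.1.2 ∧ q.2.1 < q.2.2 ∧ q.1 ≠ q.2 then
      |M q.1.1 q.1.2 - M q.2.1 q.2.2| / (2*B+1) else 1 with hgdef
  have hgpos : ∀ q, 0 < g q := by
    intro q
    rw [hgdef]
    dsimp only
    split_ifs with h
    · obtain ⟨h1, h2, h3⟩ := h
      have hne : M q.1.1 q.1.2 ≠ M q.2.1 q.2.2 := by
        apply hdist _ _ _ _ h1 h2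
        simpa using h3
      have : 0 < |M q.1.1 q.1.2 - M q.2.1 q.2.2| := abs_pos.mpr (sub_ne_zero.mpr hne)
      positivity
    · norm_num
  set S : Finset ℝ := insert (1:ℝ) (Finset.univ.image g) with hSdef
  have hSne : S.Nonempty := ⟨1, Finset.mem_insert_self _ _⟩
  refine ⟨S.min' hSne, ?_, ?_⟩
  · rw [gt_iff_lt, Finset.lt_min'_iff]
    intro y hy
    rw [hSdef, Finset.mem_insert] at hy
    rcases hy with rfl | hy
    · norm_num
    · obtain ⟨q, -, rfl⟩ := Finset.mem_image.mp hy
      exact hgpos q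
  intro ε hε hε₀
  -- the key comparison for all ordered pairs (including equal pairs)
  have main2 : ∀ a b c d : Fin N, a < b → c < d →
      (dist (p ε a) (p ε b) < dist (p ε c) (p ε d) ↔ M a b < M c d) := by
    intro a b c d hab hcd
    by_cases heq : (a, b) = (c, d)
    · obtain ⟨rfl, rfl⟩ := Prod.mk.injEq .. ▸ heq
      simp
    · have hεg : ε < g ((a, b), (c, d)) :=
        lt_of_lt_of_le hε₀ (Finset.min'_le _ _
          (Finset.mem_insert_of_mem (Finset.mem_image_of_mem g (Finset.mem_univ _))))
      rw [hgdef] at hεg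
      simp only [if_pos (show a < b ∧ c < d ∧ ((a,b) : Fin N × Fin N) ≠ (c,d) from ⟨hab, hcd, heq⟩)] at hεg
      have h2B : (0:ℝ) < 2*B+1 := by linarith
      have hεB : ε * (2*B+1) < |M a b - M c d| := by
        rw [lt_div_iff₀ h2B] at hεg
        linarith [hεg]
      have hs := sign_lemma ε B (Cc M a b - Cc M c d) (M a b - M c d) hε hBnn
        (by linarith [hCb a b, hCb c d, Cc_nonneg M a b, Cc_nonneg M c d])
        (by linarith [hCb a b, hCb c d, Cc_nonneg M a b, Cc_nonneg M c d]) hεB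
      have d1 := distSq M hsym hdiag p hp ε a b (ne_of_lt hab)
      have d2 := distSq M hsym hdiag p hp ε c d (ne_of_lt hcd)
      have hsqiff : dist (p ε a) (p ε b) < dist (p ε c) (p ε d) ↔
          dist (p ε a) (p ε b) ^ 2 < dist (p ε c) (p ε d) ^ 2 := by
        constructor
        · intro h; exact pow_lt_pow_left₀ h dist_nonneg (by norm_num)
        · intro h
          by_contra hc
          push_neg at hc
          exact absurd (pow_le_pow_left₀ dist_nonneg hc 2) (not_le.mpr h)
      rw [hsqiff, d1, d2]
      constructor
      · intro h
        have : ε * (M a b - M c d) + ε^2 * (Cc M a b - Cc M c d) < 0 := by ring_nf; ring_nf at h; linarith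
        have := hs.mp this
        linarith
      · intro h
        have : ε * (M a b - M c d) + ε^2 * (Cc M a b - Cc M c d) < 0 := hs.mpr (by linarith)
        nlinarith [this]
  constructor
  · intro i j k l hij hkl hne
    exact main2 i j k l hij hkl
  · intro i j hij
    have hiff : ∀ c d : Fin N, c < d →
        (dist (p ε c) (p ε d) < dist (p ε i) (p ε j) ↔ M c d < M i j) := by
      intro c d hcd
      rcases lt_or_gt_of_ne hij with h | h
      · exact main2 c d i j hcd h
      · rw [dist_comm (p ε i) (p ε j), ← hM i j]
        exact main2 c d j i hcd h
    unfold matOrd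
    congr 1
    apply Finset.filter_congr
    intro q _
    simp only [Matrix.of_apply]
    exact and_congr_right fun hq => hiff q.1 q.2 hq
end

section
/- There do not exist four pairwise distinct real numbers x_1, x_2, x_3, x_4 such that each of the three distances |x_1 − x_2|, |x_1 − x_3|, |x_1 − x_4| is strictly less than each of the three distances |x_2 − x_3|, |x_2 − x_4|, |x_3 − x_4|. Equivalently, for points on a line, the three smallest pairwise distances cannot all involve a common point. -/
/-- For four distinct points on a line, the three smallest pairwise distances cannot
all involve a common point: there do not exist pairwise distinct reals
`x₁, x₂, x₃, x₄` such that each of `|x₁−x₂|, |x₁−x₃|, |x₁−x₄|` is strictly smaller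
than each of `|x₂−x₃|, |x₂−x₄|, |x₃−x₄|`. -/
theorem not_exists_line_three_smallest_share_point :
    ¬ ∃ x₁ x₂ x₃ x₄ : ℝ,
      (x₁ ≠ x₂ ∧ x₁ ≠ x₃ ∧ x₁ ≠ x₄ ∧ x₂ ≠ x₃ ∧ x₂ ≠ x₄ ∧ x₃ ≠ x₄) ∧
      (∀ a ∈ ({|x₁ - x₂|, |x₁ - x₃|, |x₁ - x₄|} : Set ℝ),
        ∀ b ∈ ({|x₂ - x₃|, |x₂ - x₄|, |x₃ - x₄|} : Set ℝ), a < b) := by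
  rintro ⟨x₁, x₂, x₃, x₄, hne, h⟩
  have h23 : |x₁ - x₂| < |x₂ - x₃| := h _ (by simp) _ (by simp)
  have h24 : |x₁ - x₂| < |x₂ - x₄| := h _ (by simp) _ (by simp)
  have h34 : |x₁ - x₃| < |x₃ - x₄| := h _ (by simp) _ (by simp)
  have h32 : |x₁ - x₃| < |x₂ - x₃| := h _ (by simp) _ (by simp)
  have h42 : |x₁ - x₄| < |x₂ - x₄| := h _ (by simp) _ (by simp)
  have h43 : |x₁ - x₄| < |x₃ - x₄| := h _ (by simp) _ (by simp)
  rcases abs_cases (x₁ - x₂) with ⟨e1, _⟩ | ⟨e1, _⟩ <;>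
  rcases abs_cases (x₁ - x₃) with ⟨e2, _⟩ | ⟨e2, _⟩ <;>
  rcases abs_cases (x₁ - x₄) with ⟨e3, _⟩ | ⟨e3, _⟩ <;>
  rcases abs_cases (x₂ - x₃) with ⟨e4, _⟩ | ⟨e4, _⟩ <;>
  rcases abs_cases (x₂ - x₄) with ⟨e5, _⟩ | ⟨e5, _⟩ <;>
  rcases abs_cases (x₃ - x₄) with ⟨e6, _⟩ | ⟨e6, _⟩ <;>
  rw [e1] at h23 h24 <;> rw [e2] at h34 h32 <;> rw [e3] at h42 h43 <;>
  rw [e4] at h23 h32 <;> rw [e5] at h24 h42 <;> rw [e6] at h34 h43 <;>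
  linarith
end

section
/- Let p_1, p_2, p_3 be points in the Euclidean plane ℝ² whose pairwise distances are all strictly greater than 1. If q and q′ are points of ℝ² satisfying dist(q, p_i) < 1 and dist(q′, p_i) < 1 for each i = 1, 2, 3 (i.e., q, q′ ∈ D(p_1) ∩ D(p_2) ∩ D(p_3), the intersection of the three open unit disks), then dist(q, q′) < 1. In other words, the intersection of three unit disks whose centers are pairwise more than unit distance apart has diameter less than 1. -/
/-- dist squared in coordinates -/
lemma dist_sq_two (x y : EuclideanSpace ℝ (Fin 2)) :
    dist x y ^ 2 = (x 0 - y 0)^2 + (x 1 - y 1)^2 := by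
  rw [EuclideanSpace.dist_eq, Real.sq_sqrt (by positivity)]
  simp [Fin.sum_univ_two, Real.dist_eq, sq_abs]

/-- key 1D lemma, asymmetric version -/
lemma key' (d ti tj si sj : ℝ) (hd : 1 ≤ d) (hs : 0 ≤ si * sj) (hss : sj^2 ≤ si^2)
    (h1 : ti^2 + si^2 < 1) (h2 : (ti-d)^2 + si^2 < 1)
    (h3 : tj^2 + sj^2 < 1) (h4 : (tj-d)^2 + sj^2 < 1) :
    (ti-tj)^2 + (si-sj)^2 < 1 := by
  have hper : (si - sj)^2 ≤ si^2 := by nlinarith [sq_nonneg (si - sj), sq_nonneg (si + sj)]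
  have htj1 : tj < 1 := by nlinarith [sq_nonneg sj]
  have htj2 : d - 1 < tj := by nlinarith [sq_nonneg sj]
  have hti1 : ti < 1 := by nlinarith [sq_nonneg si]
  have hti2 : d - 1 < ti := by nlinarith [sq_nonneg si]
  rcases le_total ti (d/2) with h | h
  · have A : 0 ≤ (d - ti) - (ti - tj) := by linarith
    have B : 0 ≤ (d - ti) + (ti - tj) := by linarith
    have hmm := mul_nonneg A B
    nlinarith [hmm, hper, h2]
  · have A : 0 ≤ ti - (ti - tj) := by linarith
    have B : 0 ≤ ti + (ti - tj) := by linarith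
    have hmm := mul_nonneg A B
    nlinarith [hmm, hper, h1]

lemma key (d ti tj si sj : ℝ) (hd : 1 ≤ d) (hs : 0 ≤ si * sj)
    (h1 : ti^2 + si^2 < 1) (h2 : (ti-d)^2 + si^2 < 1)
    (h3 : tj^2 + sj^2 < 1) (h4 : (tj-d)^2 + sj^2 < 1) :
    (ti-tj)^2 + (si-sj)^2 < 1 := by
  rcases le_total (sj^2) (si^2) with hss | hss
  · exact key' d ti tj si sj hd hs hss h1 h2 h3 h4
  · have := key' d tj ti sj si hd (by linarith [mul_comm si sj]) hss h3 h4 h1 h2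
    nlinarith [this]

lemma arith_false (x1 y1 x2 y2 x3 y3 u v u' v' : ℝ)
    (h12 : 1 < (x1 - x2)^2 + (y1 - y2)^2)
    (h13 : 1 < (x1 - x3)^2 + (y1 - y3)^2)
    (h23 : 1 < (x2 - x3)^2 + (y2 - y3)^2)
    (c1 : (u - x1)^2 + (v - y1)^2 < 1)
    (c2 : (u - x2)^2 + (v - y2)^2 < 1)
    (c3 : (u - x3)^2 + (v - y3)^2 < 1)
    (c1' : (u' - x1)^2 + (v' - y1)^2 < 1)
    (c2' : (u' - x2)^2 + (v' - y2)^2 < 1)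
    (c3' : (u' - x3)^2 + (v' - y3)^2 < 1)
    (hD : 1 ≤ (u' - u)^2 + (v' - v)^2) : False := by
  have hDnn : (0:ℝ) ≤ (u' - u)^2 + (v' - v)^2 := by positivity
  obtain ⟨d, hdnn, hd2⟩ : ∃ d : ℝ, 0 ≤ d ∧ d^2 = (u' - u)^2 + (v' - v)^2 :=
    ⟨Real.sqrt _, Real.sqrt_nonneg _, Real.sq_sqrt hDnn⟩
  have hd1 : 1 ≤ d := by
    rw [← abs_of_nonneg hdnn]
    exact (one_le_sq_iff_one_le_abs d).mp (by linarith [hd2])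
  have hdne : d ≠ 0 := by linarith
  obtain ⟨a, ha⟩ : ∃ a : ℝ, a = (u' - u) / d := ⟨_, rfl⟩
  obtain ⟨b, hb⟩ : ∃ b : ℝ, b = (v' - v) / d := ⟨_, rfl⟩
  have hu' : u' = u + d * a := by rw [ha]; field_simp; ring
  have hv' : v' = v + d * b := by rw [hb]; field_simp; ring
  have hab : a^2 + b^2 = 1 := by
    rw [ha, hb]
    field_simp
    linarith [hd2]
  obtain ⟨t1, ht1⟩ : ∃ t : ℝ, t = a * (x1 - u) + b * (y1 - v) := ⟨_, rfl⟩
  obtain ⟨t2, ht2⟩ : ∃ t : ℝ, t = a * (x2 - u) + b * (y2 - v) := ⟨_, rfl⟩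
  obtain ⟨t3, ht3⟩ : ∃ t : ℝ, t = a * (x3 - u) + b * (y3 - v) := ⟨_, rfl⟩
  obtain ⟨s1, hs1⟩ : ∃ s : ℝ, s = -b * (x1 - u) + a * (y1 - v) := ⟨_, rfl⟩
  obtain ⟨s2, hs2⟩ : ∃ s : ℝ, s = -b * (x2 - u) + a * (y2 - v) := ⟨_, rfl⟩
  obtain ⟨s3, hs3⟩ : ∃ s : ℝ, s = -b * (x3 - u) + a * (y3 - v) := ⟨_, rfl⟩
  have e1 : t1^2 + s1^2 < 1 := by
    have : t1^2 + s1^2 = (u - x1)^2 + (v - y1)^2 := by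
      rw [ht1, hs1]; linear_combination ((x1 - u)^2 + (y1 - v)^2) * hab
    linarith
  have e2 : t2^2 + s2^2 < 1 := by
    have : t2^2 + s2^2 = (u - x2)^2 + (v - y2)^2 := by
      rw [ht2, hs2]; linear_combination ((x2 - u)^2 + (y2 - v)^2) * hab
    linarith
  have e3 : t3^2 + s3^2 < 1 := by
    have : t3^2 + s3^2 = (u - x3)^2 + (v - y3)^2 := by
      rw [ht3, hs3]; linear_combination ((x3 - u)^2 + (y3 - v)^2) * hab
    linarith
  have f1 : (t1 - d)^2 + s1^2 < 1 := by
    have : (t1 - d)^2 + s1^2 = (u' - x1)^2 + (v' - y1)^2 := by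
      rw [ht1, hs1, hu', hv']
      linear_combination ((x1 - u)^2 + (y1 - v)^2 - d^2) * hab
    linarith
  have f2 : (t2 - d)^2 + s2^2 < 1 := by
    have : (t2 - d)^2 + s2^2 = (u' - x2)^2 + (v' - y2)^2 := by
      rw [ht2, hs2, hu', hv']
      linear_combination ((x2 - u)^2 + (y2 - v)^2 - d^2) * hab
    linarith
  have f3 : (t3 - d)^2 + s3^2 < 1 := by
    have : (t3 - d)^2 + s3^2 = (u' - x3)^2 + (v' - y3)^2 := by
      rw [ht3, hs3, hu', hv']
      linear_combination ((x3 - u)^2 + (y3 - v)^2 - d^2) * hab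
    linarith
  have g12 : 1 < (t1 - t2)^2 + (s1 - s2)^2 := by
    have : (t1 - t2)^2 + (s1 - s2)^2 = (x1 - x2)^2 + (y1 - y2)^2 := by
      rw [ht1, ht2, hs1, hs2]
      linear_combination ((x1 - x2)^2 + (y1 - y2)^2) * hab
    linarith
  have g13 : 1 < (t1 - t3)^2 + (s1 - s3)^2 := by
    have : (t1 - t3)^2 + (s1 - s3)^2 = (x1 - x3)^2 + (y1 - y3)^2 := by
      rw [ht1, ht3, hs1, hs3]
      linear_combination ((x1 - x3)^2 + (y1 - y3)^2) * hab
    linarith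
  have g23 : 1 < (t2 - t3)^2 + (s2 - s3)^2 := by
    have : (t2 - t3)^2 + (s2 - s3)^2 = (x2 - x3)^2 + (y2 - y3)^2 := by
      rw [ht2, ht3, hs2, hs3]
      linear_combination ((x2 - x3)^2 + (y2 - y3)^2) * hab
    linarith
  rcases le_or_gt 0 (s1 * s2) with hsgn | hn12
  · linarith [key d t1 t2 s1 s2 hd1 hsgn e1 f1 e2 f2]
  · rcases le_or_gt 0 (s1 * s3) with hsgn | hn13
    · linarith [key d t1 t3 s1 s3 hd1 hsgn e1 f1 e3 f3]
    · have hsgn : 0 ≤ s2 * s3 := by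
        by_contra h
        push_neg at h
        have hp : 0 < (s1 * s2) * (s1 * s3) := mul_pos_of_neg_of_neg hn12 hn13
        have heq : (s1 * s2) * (s1 * s3) = s1^2 * (s2 * s3) := by ring
        have hle : s1^2 * (s2 * s3) ≤ 0 :=
          mul_nonpos_iff.mpr (Or.inl ⟨sq_nonneg s1, h.le⟩)
        linarith [heq ▸ hp]
      linarith [key d t2 t3 s2 s3 hd1 hsgn e2 f2 e3 f3]

/-- If the three centers `p₁, p₂, p₃` in the Euclidean plane are pairwise more than
unit distance apart, then the intersection of the three open unit disks around them
has diameter less than `1`: any two points `q, q'` lying within distance `1` of all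
three centers satisfy `dist q q' < 1`. -/
theorem dist_lt_one_of_mem_three_disks
    (p₁ p₂ p₃ q q' : EuclideanSpace ℝ (Fin 2))
    (h12 : 1 < dist p₁ p₂) (h13 : 1 < dist p₁ p₃) (h23 : 1 < dist p₂ p₃)
    (hq1 : dist q p₁ < 1) (hq2 : dist q p₂ < 1) (hq3 : dist q p₃ < 1)
    (hq'1 : dist q' p₁ < 1) (hq'2 : dist q' p₂ < 1) (hq'3 : dist q' p₃ < 1) :
    dist q q' < 1 := by
  by_contra hcon
  push_neg at hcon
  refine arith_false (p₁ 0) (p₁ 1) (p₂ 0) (p₂ 1) (p₃ 0) (p₃ 1) (q 0) (q 1) (q' 0) (q' 1)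
    ?_ ?_ ?_ ?_ ?_ ?_ ?_ ?_ ?_ ?_
  · rw [← dist_sq_two]; nlinarith [dist_nonneg (x := p₁) (y := p₂)]
  · rw [← dist_sq_two]; nlinarith [dist_nonneg (x := p₁) (y := p₃)]
  · rw [← dist_sq_two]; nlinarith [dist_nonneg (x := p₂) (y := p₃)]
  · rw [← dist_sq_two]; nlinarith [dist_nonneg (x := q) (y := p₁)]
  · rw [← dist_sq_two]; nlinarith [dist_nonneg (x := q) (y := p₂)]
  · rw [← dist_sq_two]; nlinarith [dist_nonneg (x := q) (y := p₃)]
  · rw [← dist_sq_two]; nlinarith [dist_nonneg (x := q') (y := p₁)]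
  · rw [← dist_sq_two]; nlinarith [dist_nonneg (x := q') (y := p₂)]
  · rw [← dist_sq_two]; nlinarith [dist_nonneg (x := q') (y := p₃)]
  · rw [← dist_sq_two]
    have : dist q q' = dist q' q := dist_comm _ _
    nlinarith [dist_nonneg (x := q') (y := q)]
end

section
/- There do not exist five points p_1, …, p_5 in the Euclidean plane ℝ² such that each of the six distances dist(p_i, p_α), for i ∈ {1,2,3} and α ∈ {4,5}, is strictly less than each of the remaining pairwise distances dist(p_1,p_2), dist(p_1,p_3), dist(p_2,p_3), and dist(p_4,p_5). Consequently, a 5×5 matrix ordering in which the six entries M_{iα} (i ∈ {1,2,3}, α ∈ {4,5}) are the six smallest off-diagonal entries cannot be geometrically realized by points in the plane. -/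
lemma dist_sq (a b : EuclideanSpace ℝ (Fin 2)) :
    dist a b ^ 2 = (a 0 - b 0)^2 + (a 1 - b 1)^2 := by
  rw [EuclideanSpace.dist_eq, Real.sq_sqrt (by positivity), Fin.sum_univ_two]
  simp [Real.dist_eq, sq_abs]

def vc (x y q : EuclideanSpace ℝ (Fin 2)) : ℝ :=
  (y 0 - x 0) * (q 1 - x 1) - (y 1 - x 1) * (q 0 - x 0)

lemma key_s10 (d u1 u2 v1 v2 : ℝ) (hu1 : 0 < u1) (hu1' : u1 < d) (hu2 : 0 < u2) (hu2' : u2 < d)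
    (hv : 0 ≤ v1 * v2)
    (hA : u1^2 + v1^2 < (u1-u2)^2 + (v1-v2)^2)
    (hB : u2^2 + v2^2 < (u1-u2)^2 + (v1-v2)^2)
    (hC : (u1-d)^2 + v1^2 < (u1-u2)^2 + (v1-v2)^2)
    (hD : (u2-d)^2 + v2^2 < (u1-u2)^2 + (v1-v2)^2) : False := by
  have hmax : (v1-v2)^2 ≤ v1^2 ∨ (v1-v2)^2 ≤ v2^2 := by
    rcases le_total (v1^2) (v2^2) with h | h
    · right; nlinarith [sq_nonneg (v1-v2), sq_nonneg (v1+v2)]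
    · left; nlinarith [sq_nonneg (v1-v2), sq_nonneg (v1+v2)]
  rcases le_total u1 u2 with hu | hu
  · rcases hmax with h | h
    · have : (u1-u2)^2 < (u1-d)^2 := by nlinarith
      linarith
    · have : (u1-u2)^2 < u2^2 := by nlinarith
      linarith
  · rcases hmax with h | h
    · have : (u1-u2)^2 < u1^2 := by nlinarith
      linarith
    · have : (u1-u2)^2 < (u2-d)^2 := by nlinarith
      linarith


lemma key2 (d2 u1 u2 v1 v2 : ℝ) (hd2 : 0 < d2)
    (hax' : u1^2 + v1^2 < d2^2) (hay' : (u1-d2)^2 + v1^2 < d2^2)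
    (hbx' : u2^2 + v2^2 < d2^2) (hby' : (u2-d2)^2 + v2^2 < d2^2)
    (hv : 0 ≤ v1 * v2)
    (hA : u1^2 + v1^2 < (u1-u2)^2 + (v1-v2)^2)
    (hB : u2^2 + v2^2 < (u1-u2)^2 + (v1-v2)^2)
    (hC : (u1-d2)^2 + v1^2 < (u1-u2)^2 + (v1-v2)^2)
    (hD : (u2-d2)^2 + v2^2 < (u1-u2)^2 + (v1-v2)^2) : False := by
  have hu1p : 0 < u1 := by nlinarith [sq_nonneg v1, sq_nonneg u1]
  have hu1d : u1 < d2 := by nlinarith [sq_nonneg v1]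
  have hu2p : 0 < u2 := by nlinarith [sq_nonneg v2, sq_nonneg u2]
  have hu2d : u2 < d2 := by nlinarith [sq_nonneg v2]
  exact key_s10 d2 u1 u2 v1 v2 hu1p hu1d hu2p hu2d hv hA hB hC hD

lemma pairFalse (x y a b : EuclideanSpace ℝ (Fin 2))
    (hax : dist a x < dist x y) (hay : dist a y < dist x y)
    (hbx : dist b x < dist x y) (hby : dist b y < dist x y)
    (h1 : dist a x < dist a b) (h2 : dist a y < dist a b)
    (h3 : dist b x < dist a b) (h4 : dist b y < dist a b)
    (hv : 0 ≤ vc x y a * vc x y b) : False := by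
  -- pass to squared distances
  have sq_mono : ∀ {s t : ℝ}, 0 ≤ s → s < t → s^2 < t^2 := fun hs hst => by nlinarith
  have Hax := sq_mono dist_nonneg hax
  have Hay := sq_mono dist_nonneg hay
  have Hbx := sq_mono dist_nonneg hbx
  have Hby := sq_mono dist_nonneg hby
  have H1 := sq_mono dist_nonneg h1
  have H2 := sq_mono dist_nonneg h2
  have H3 := sq_mono dist_nonneg h3
  have H4 := sq_mono dist_nonneg h4
  rw [dist_sq, dist_sq] at Hax Hay Hbx Hby H1 H2 H3 H4
  set d2 : ℝ := (y 0 - x 0)^2 + (y 1 - x 1)^2 with hd2def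
  have hxy : (x 0 - y 0)^2 + (x 1 - y 1)^2 = d2 := by ring
  have hd2 : 0 < d2 := by
    have h0 : (0:ℝ) < dist x y := lt_of_le_of_lt dist_nonneg hax
    have h0' := pow_pos h0 2
    rw [dist_sq] at h0'
    linarith
  set u1 : ℝ := (a 0 - x 0) * (y 0 - x 0) + (a 1 - x 1) * (y 1 - x 1) with hu1def
  set u2 : ℝ := (b 0 - x 0) * (y 0 - x 0) + (b 1 - x 1) * (y 1 - x 1) with hu2def
  set v1 : ℝ := vc x y a with hv1def
  set v2 : ℝ := vc x y b with hv2def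
  have ev1 : v1 = (y 0 - x 0) * (a 1 - x 1) - (y 1 - x 1) * (a 0 - x 0) := rfl
  have ev2 : v2 = (y 0 - x 0) * (b 1 - x 1) - (y 1 - x 1) * (b 0 - x 0) := rfl
  have Iax : ((a 0 - x 0)^2 + (a 1 - x 1)^2) * d2 = u1^2 + v1^2 := by
    rw [ev1, hu1def, hd2def]; ring
  have Iay : ((a 0 - y 0)^2 + (a 1 - y 1)^2) * d2 = (u1 - d2)^2 + v1^2 := by
    rw [ev1, hu1def, hd2def]; ring
  have Ibx : ((b 0 - x 0)^2 + (b 1 - x 1)^2) * d2 = u2^2 + v2^2 := by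
    rw [ev2, hu2def, hd2def]; ring
  have Iby : ((b 0 - y 0)^2 + (b 1 - y 1)^2) * d2 = (u2 - d2)^2 + v2^2 := by
    rw [ev2, hu2def, hd2def]; ring
  have Iab : ((a 0 - b 0)^2 + (a 1 - b 1)^2) * d2 = (u1 - u2)^2 + (v1 - v2)^2 := by
    rw [ev1, ev2, hu1def, hu2def]; ring
  -- multiplied inequalities
  have hax' : u1^2 + v1^2 < d2^2 := by
    have := mul_lt_mul_of_pos_right Hax hd2
    rw [Iax, hxy] at this; calc u1^2+v1^2 < d2*d2 := this
      _ = d2^2 := by ring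
  have hay' : (u1 - d2)^2 + v1^2 < d2^2 := by
    have := mul_lt_mul_of_pos_right Hay hd2
    rw [Iay, hxy] at this; calc (u1-d2)^2+v1^2 < d2*d2 := this
      _ = d2^2 := by ring
  have hbx' : u2^2 + v2^2 < d2^2 := by
    have := mul_lt_mul_of_pos_right Hbx hd2
    rw [Ibx, hxy] at this; calc u2^2+v2^2 < d2*d2 := this
      _ = d2^2 := by ring
  have hby' : (u2 - d2)^2 + v2^2 < d2^2 := by
    have := mul_lt_mul_of_pos_right Hby hd2
    rw [Iby, hxy] at this; calc (u2-d2)^2+v2^2 < d2*d2 := this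
      _ = d2^2 := by ring
  have hA : u1^2 + v1^2 < (u1-u2)^2 + (v1-v2)^2 := by
    have := mul_lt_mul_of_pos_right H1 hd2
    rw [Iax, Iab] at this; exact this
  have hB : u2^2 + v2^2 < (u1-u2)^2 + (v1-v2)^2 := by
    have := mul_lt_mul_of_pos_right H3 hd2
    rw [Ibx, Iab] at this; exact this
  have hC : (u1-d2)^2 + v1^2 < (u1-u2)^2 + (v1-v2)^2 := by
    have := mul_lt_mul_of_pos_right H2 hd2
    rw [Iay, Iab] at this; exact this
  have hD : (u2-d2)^2 + v2^2 < (u1-u2)^2 + (v1-v2)^2 := by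
    have := mul_lt_mul_of_pos_right H4 hd2
    rw [Iby, Iab] at this; exact this
  exact key2 d2 u1 u2 v1 v2 hd2 hax' hay' hbx' hby' hv hA hB hC hD

lemma matOrd_le {N : ℕ} (M : Matrix (Fin N) (Fin N) ℝ) {i j k l : Fin N}
    (h : M i j ≤ M k l) : matOrd M i j ≤ matOrd M k l := by
  apply Finset.card_le_card
  intro q hq
  simp only [Finset.mem_filter, Finset.mem_univ, true_and] at hq ⊢
  exact ⟨hq.1, lt_of_lt_of_le hq.2 h⟩

lemma matOrd_lt {N : ℕ} (M : Matrix (Fin N) (Fin N) ℝ) (hM : M.IsSymm) {i j k l : Fin N}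
    (hij : i ≠ j) (h : M i j < M k l) : matOrd M i j < matOrd M k l := by
  apply Finset.card_lt_card
  constructor
  · intro q hq
    simp only [Finset.mem_filter, Finset.mem_univ, true_and] at hq ⊢
    exact ⟨hq.1, hq.2.trans h⟩
  · intro hsub
    rcases lt_or_gt_of_ne hij with hlt | hlt
    · have hmem : (i, j) ∈ Finset.univ.filter
          (fun q : Fin N × Fin N => q.1 < q.2 ∧ M q.1 q.2 < M k l) := by
        simp only [Finset.mem_filter, Finset.mem_univ, true_and]
        exact ⟨hlt, h⟩
      have := hsub hmem
      simp only [Finset.mem_filter, Finset.mem_univ, true_and] at this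
      exact lt_irrefl _ this.2
    · have hsym : M j i = M i j := hM.apply i j
      have hmem : (j, i) ∈ Finset.univ.filter
          (fun q : Fin N × Fin N => q.1 < q.2 ∧ M q.1 q.2 < M k l) := by
        simp only [Finset.mem_filter, Finset.mem_univ, true_and]
        exact ⟨hlt, hsym ▸ h⟩
      have := hsub hmem
      simp only [Finset.mem_filter, Finset.mem_univ, true_and] at this
      rw [hsym] at this
      exact lt_irrefl _ this.2

lemma pigeon (v0 v1 v2 : ℝ) : 0 ≤ v0*v1 ∨ 0 ≤ v0*v2 ∨ 0 ≤ v1*v2 := by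
  by_contra h
  push_neg at h
  obtain ⟨h1, h2, h3⟩ := h
  nlinarith [sq_nonneg (v0*v1*v2), mul_pos (mul_pos (neg_pos.2 h1) (neg_pos.2 h2)) (neg_pos.2 h3)]


lemma part1 :
    ¬ ∃ p : Fin 5 → EuclideanSpace ℝ (Fin 2),
      ∀ i α j l : Fin 5, i ∈ ({0, 1, 2} : Set (Fin 5)) → α ∈ ({3, 4} : Set (Fin 5)) →
        (j, l) ∈ ({(0, 1), (0, 2), (1, 2), (3, 4)} : Set (Fin 5 × Fin 5)) →
        dist (p i) (p α) < dist (p j) (p l) := by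
  rintro ⟨p, H⟩
  have m0 : (0 : Fin 5) ∈ ({0, 1, 2} : Set (Fin 5)) := by simp
  have m1 : (1 : Fin 5) ∈ ({0, 1, 2} : Set (Fin 5)) := by simp
  have m2 : (2 : Fin 5) ∈ ({0, 1, 2} : Set (Fin 5)) := by simp
  have m3 : (3 : Fin 5) ∈ ({3, 4} : Set (Fin 5)) := by simp
  have m4 : (4 : Fin 5) ∈ ({3, 4} : Set (Fin 5)) := by simp
  have q01 : ((0, 1) : Fin 5 × Fin 5) ∈
      ({(0, 1), (0, 2), (1, 2), (3, 4)} : Set (Fin 5 × Fin 5)) := by simp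
  have q02 : ((0, 2) : Fin 5 × Fin 5) ∈
      ({(0, 1), (0, 2), (1, 2), (3, 4)} : Set (Fin 5 × Fin 5)) := by simp
  have q12 : ((1, 2) : Fin 5 × Fin 5) ∈
      ({(0, 1), (0, 2), (1, 2), (3, 4)} : Set (Fin 5 × Fin 5)) := by simp
  have q34 : ((3, 4) : Fin 5 × Fin 5) ∈
      ({(0, 1), (0, 2), (1, 2), (3, 4)} : Set (Fin 5 × Fin 5)) := by simp
  rcases pigeon (vc (p 3) (p 4) (p 0)) (vc (p 3) (p 4) (p 1)) (vc (p 3) (p 4) (p 2))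
    with h | h | h
  · exact pairFalse (p 3) (p 4) (p 0) (p 1)
      (H 0 3 3 4 m0 m3 q34) (H 0 4 3 4 m0 m4 q34) (H 1 3 3 4 m1 m3 q34) (H 1 4 3 4 m1 m4 q34)
      (H 0 3 0 1 m0 m3 q01) (H 0 4 0 1 m0 m4 q01) (H 1 3 0 1 m1 m3 q01) (H 1 4 0 1 m1 m4 q01) h
  · exact pairFalse (p 3) (p 4) (p 0) (p 2)
      (H 0 3 3 4 m0 m3 q34) (H 0 4 3 4 m0 m4 q34) (H 2 3 3 4 m2 m3 q34) (H 2 4 3 4 m2 m4 q34)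
      (H 0 3 0 2 m0 m3 q02) (H 0 4 0 2 m0 m4 q02) (H 2 3 0 2 m2 m3 q02) (H 2 4 0 2 m2 m4 q02) h
  · exact pairFalse (p 3) (p 4) (p 1) (p 2)
      (H 1 3 3 4 m1 m3 q34) (H 1 4 3 4 m1 m4 q34) (H 2 3 3 4 m2 m3 q34) (H 2 4 3 4 m2 m4 q34)
      (H 1 3 1 2 m1 m3 q12) (H 1 4 1 2 m1 m4 q12) (H 2 3 1 2 m2 m3 q12) (H 2 4 1 2 m2 m4 q12) h

/-- There do not exist five points `p₀, …, p₄` in the Euclidean plane such that each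
of the six distances `dist pᵢ p_α` (for `i ∈ {0,1,2}`, `α ∈ {3,4}`) is strictly
smaller than each of the remaining pairwise distances
`dist p₀ p₁, dist p₀ p₂, dist p₁ p₂, dist p₃ p₄`.  Consequently, a `5 × 5` matrix
ordering in which the six entries `M i α` (`i ∈ {0,1,2}`, `α ∈ {3,4}`) are the six
smallest off-diagonal entries cannot be geometrically realized by points in the
plane (i.e. there is no family of points whose distance matrix `D` has `D̂ = M̂`). -/

theorem no_planar_realization_of_six_smallest_cross_distances :
    (¬ ∃ p : Fin 5 → EuclideanSpace ℝ (Fin 2),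
      ∀ i α j l : Fin 5, i ∈ ({0, 1, 2} : Set (Fin 5)) → α ∈ ({3, 4} : Set (Fin 5)) →
        (j, l) ∈ ({(0, 1), (0, 2), (1, 2), (3, 4)} : Set (Fin 5 × Fin 5)) →
        dist (p i) (p α) < dist (p j) (p l)) ∧
    (∀ M : Matrix (Fin 5) (Fin 5) ℝ, M.IsSymm →
      (∀ i α j l : Fin 5, i ∈ ({0, 1, 2} : Set (Fin 5)) → α ∈ ({3, 4} : Set (Fin 5)) →
        (j, l) ∈ ({(0, 1), (0, 2), (1, 2), (3, 4)} : Set (Fin 5 × Fin 5)) →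
        M i α < M j l) →
      ¬ ∃ p : Fin 5 → EuclideanSpace ℝ (Fin 2),
        ∀ i j : Fin 5, i ≠ j →
          matOrd (Matrix.of fun a b : Fin 5 => dist (p a) (p b)) i j = matOrd M i j) := by
  refine ⟨part1, ?_⟩
  intro M hM hord
  rintro ⟨p, hp⟩
  apply part1
  refine ⟨p, ?_⟩
  intro i α j l hi hα hjl
  have hiα : i ≠ α := by
    simp only [Set.mem_insert_iff, Set.mem_singleton_iff] at hi hα
    rcases hi with rfl | rfl | rfl <;> rcases hα with rfl | rfl <;> decide
  have hjl' : j ≠ l := by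
    simp only [Set.mem_insert_iff, Set.mem_singleton_iff, Prod.ext_iff] at hjl
    rcases hjl with ⟨rfl, rfl⟩ | ⟨rfl, rfl⟩ | ⟨rfl, rfl⟩ | ⟨rfl, rfl⟩ <;> decide
  have h : matOrd M i α < matOrd M j l := matOrd_lt M hM hiα (hord i α j l hi hα hjl)
  rw [← hp i α hiα, ← hp j l hjl'] at h
  by_contra hc
  push_neg at hc
  have hle : matOrd (Matrix.of fun a b : Fin 5 => dist (p a) (p b)) j l ≤
      matOrd (Matrix.of fun a b : Fin 5 => dist (p a) (p b)) i α :=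
    matOrd_le _ hc
  exact lt_irrefl _ (h.trans_le hle)
end
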